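/- Let c > 0, α > -1/2, χ > c² + α² - 1/4, and c² > α² - 1/4, and let a_α = 0 if α² ≤ 1/4 and a_α = ((α²-1/4)/c²)^{1/4} if α > 1/2. Suppose φ : (0,1] → ℝ is a C² solution of d/dt[(1-t²)φ'(t)] + (χ - c²t² + (1/4 - α²)/t²)φ(t) = 0. Then sup over t in [a_α, 1] of |φ(t)| equals |φ(1)|. -/

import Mathlib

open Set Filter Topology

set_option maxHeartbeats 1000000 in
theorem stmt_2 (c α χ : ℝ) (hc : 0 < c) (hα : -1/2 < α)
    (hχ : χ > c ^ 2 + α ^ 2 - 1/4) (hca : c ^ 2 > α ^ 2 - 1/4)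
    (aα : ℝ)
    (haα : aα = if α ^ 2 ≤ 1/4 then 0 else ((α ^ 2 - 1/4) / c ^ 2) ^ ((1 : ℝ)/4))
    (φ : ℝ → ℝ) (hφ : ContDiffOn ℝ 2 φ (Ioc 0 1))
    (hφcont : ContinuousOn φ (Icc 0 1))
    (hODE : ∀ t ∈ Ioo (0 : ℝ) 1,
      deriv (fun s => (1 - s ^ 2) * deriv φ s) t
        + (χ - c ^ 2 * t ^ 2 + (1/4 - α ^ 2) / t ^ 2) * φ t = 0) :
    sSup ((fun t => |φ t|) '' Icc aα 1) = |φ 1| := by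
  have hc2 : (0:ℝ) < c ^ 2 := by positivity
  have haα0 : 0 ≤ aα := by
    rw [haα]; split_ifs with h
    · exact le_refl 0
    · exact Real.rpow_nonneg (div_nonneg (by push_neg at h; linarith) hc2.le) _
  have haα1 : aα ≤ 1 := by
    rw [haα]; split_ifs with h
    · norm_num
    · push_neg at h
      exact Real.rpow_le_one (div_nonneg (by linarith) hc2.le)
        ((div_le_one hc2).2 (by linarith)) (by norm_num)
  -- the potential q
  set q : ℝ → ℝ := fun s => χ - c ^ 2 * s ^ 2 + (1/4 - α ^ 2) / s ^ 2 with hqdef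
  have hq1 : 0 < q 1 := by simp only [hqdef]; norm_num; linarith
  -- key power bound
  have hpow4 : ∀ s : ℝ, 0 < s → aα ≤ s → α ^ 2 - 1/4 ≤ c ^ 2 * s ^ 4 := by
    intro s hs hsa
    rw [haα] at hsa
    split_ifs at hsa with h
    · nlinarith [pow_pos hs 4]
    · push_neg at h
      set x := (α ^ 2 - 1/4) / c ^ 2 with hxdef
      have hx0 : 0 < x := div_pos (by linarith) hc2
      have h4 : (x ^ ((1:ℝ)/4)) ^ (4:ℕ) = x := by
        rw [← Real.rpow_natCast (x ^ ((1:ℝ)/4)) 4, ← Real.rpow_mul hx0.le]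
        norm_num
      have hs4 : x ≤ s ^ 4 := by
        calc x = (x ^ ((1:ℝ)/4)) ^ (4:ℕ) := h4.symm
        _ ≤ s ^ 4 := pow_le_pow_left₀ (Real.rpow_nonneg hx0.le _) hsa 4
      calc α ^ 2 - 1/4 = c ^ 2 * x := by rw [hxdef]; field_simp
      _ ≤ c ^ 2 * s ^ 4 := by nlinarith
  have hqge : ∀ s : ℝ, 0 < s → s ≤ 1 → aα ≤ s → q 1 ≤ q s := by
    intro s hs hs1 hsa
    have h4 := hpow4 s hs hsa
    have hs2 : (s:ℝ) ^ 2 ≠ 0 := by positivity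
    have expand : q s - q 1 = ((c ^ 2 * s ^ 2 - (α ^ 2 - 1/4)) * (1 - s ^ 2)) / s ^ 2 := by
      simp only [hqdef]; field_simp; ring
    have h1 : α ^ 2 - 1/4 ≤ c ^ 2 * s ^ 2 := by nlinarith
    have h2 : 0 ≤ q s - q 1 := by
      rw [expand]
      exact div_nonneg (mul_nonneg (by linarith) (by nlinarith)) (by positivity)
    linarith
  -- smoothness
  have hφO : ContDiffOn ℝ 2 φ (Ioo 0 1) := hφ.mono Ioo_subset_Ioc_self
  have hφ'O : ContDiffOn ℝ 1 (deriv φ) (Ioo 0 1) :=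
    hφO.deriv_of_isOpen isOpen_Ioo (by norm_num)
  have hdφ : ∀ s ∈ Ioo (0:ℝ) 1, HasDerivAt φ (deriv φ s) s := fun s hs =>
    ((hφO.differentiableOn (by norm_num) s hs).differentiableAt
      (isOpen_Ioo.mem_nhds hs)).hasDerivAt
  have hdP : ∀ s ∈ Ioo (0:ℝ) 1, HasDerivAt (deriv φ) (deriv (deriv φ) s) s := fun s hs =>
    ((hφ'O.differentiableOn (by norm_num) s hs).differentiableAt
      (isOpen_Ioo.mem_nhds hs)).hasDerivAt
  -- the ODE rearranged
  have hODE' : ∀ s ∈ Ioo (0:ℝ) 1,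
      (1 - s ^ 2) * deriv (deriv φ) s = 2 * s * deriv φ s - q s * φ s := by
    intro s hs
    have hlin : HasDerivAt (fun u : ℝ => 1 - u ^ 2) (-(2*s)) s := by
      simpa using ((hasDerivAt_const s (1:ℝ)).fun_sub (hasDerivAt_pow 2 s))
    have h1 := hlin.fun_mul (hdP s hs)
    have h2 := hODE s hs
    rw [h1.deriv] at h2
    simp only [hqdef]
    nlinarith [h2]
  -- derivative of q
  have hq' : ∀ s : ℝ, s ≠ 0 →
      HasDerivAt q ((2*(α ^ 2 - 1/4) - 2*c ^ 2*s ^ 4)/s ^ 3) s := by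
    intro s hs
    have h1 : HasDerivAt (fun u : ℝ => χ - c ^ 2 * u ^ 2) (-(c ^ 2 * (2*s))) s := by
      simpa using ((hasDerivAt_const s χ).fun_sub (HasDerivAt.const_mul (c ^ 2) (hasDerivAt_pow 2 s)))
    have h2 : HasDerivAt (fun u : ℝ => (1/4 - α ^ 2)/u ^ 2)
        ((0 * s ^ 2 - (1/4 - α ^ 2) * (2 * s))/(s ^ 2) ^ 2) s := by
      have := HasDerivAt.fun_div (hasDerivAt_const s (1/4 - α ^ 2)) (hasDerivAt_pow 2 s)
        (pow_ne_zero 2 hs)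
      simpa using this
    have h3 := h1.fun_add h2
    rw [hqdef]
    refine h3.congr_deriv ?_
    field_simp
    ring
  -- Q and its derivative
  set Q : ℝ → ℝ := fun s => φ s ^ 2 + (1 - s ^ 2) * (deriv φ s) ^ 2 / q s with hQdef
  set E : ℝ → ℝ := fun s => (deriv φ s) ^ 2 *
    (2*s*q s - (1 - s ^ 2) * ((2*(α ^ 2 - 1/4) - 2*c ^ 2*s ^ 4)/s ^ 3)) / (q s) ^ 2 with hEdef
  have hQder : ∀ s ∈ Ioo (0:ℝ) 1, aα ≤ s → HasDerivAt Q (E s) s ∧ 0 ≤ E s := by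
    intro s hs hsa
    have hs0 : (0:ℝ) < s := hs.1
    have h1s : (0:ℝ) < 1 - s ^ 2 := by nlinarith [hs.2]
    have hqs : 0 < q s := lt_of_lt_of_le hq1 (hqge s hs0 hs.2.le hsa)
    have hA : HasDerivAt (fun u => φ u ^ 2) (2 * φ s * deriv φ s) s := by
      simpa using (hdφ s hs).fun_pow 2
    have hlin : HasDerivAt (fun u : ℝ => 1 - u ^ 2) (-(2*s)) s := by
      simpa using ((hasDerivAt_const s (1:ℝ)).fun_sub (hasDerivAt_pow 2 s))
    have hPsq : HasDerivAt (fun u => (deriv φ u) ^ 2)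
        (2 * deriv φ s * deriv (deriv φ) s) s := by
      simpa using (hdP s hs).fun_pow 2
    have hB := hlin.fun_mul hPsq
    have hC := HasDerivAt.fun_div hB (hq' s hs0.ne') hqs.ne'
    have hQ' := hA.fun_add hC
    have hP2 : deriv (deriv φ) s = (2*s*deriv φ s - q s * φ s)/(1 - s ^ 2) := by
      rw [eq_div_iff h1s.ne']
      linarith [hODE' s hs]
    constructor
    · refine hQ'.congr_deriv ?_
      rw [hEdef, hP2]
      field_simp
      ring
    · have hqd : (2*(α ^ 2 - 1/4) - 2*c ^ 2*s ^ 4)/s ^ 3 ≤ 0 :=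
        div_nonpos_of_nonpos_of_nonneg (by nlinarith [hpow4 s hs0 hsa]) (by positivity)
      have hfac : 0 ≤ 2*s*q s - (1 - s ^ 2) * ((2*(α ^ 2 - 1/4) - 2*c ^ 2*s ^ 4)/s ^ 3) := by
        have h5 : (1 - s ^ 2) * ((2*(α ^ 2 - 1/4) - 2*c ^ 2*s ^ 4)/s ^ 3) ≤ 0 :=
          mul_nonpos_iff.2 (Or.inl ⟨h1s.le, hqd⟩)
        have h6 : 0 ≤ 2*s*q s := mul_nonneg (by positivity) hqs.le
        exact sub_nonneg.2 (h5.trans h6)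
      rw [hEdef]
      exact div_nonneg (mul_nonneg (sq_nonneg _) hfac) (sq_nonneg _)
  -- monotonicity of Q
  have hmono : ∀ t₀ ∈ Ioo (0:ℝ) 1, aα ≤ t₀ → ∀ r ∈ Ico t₀ 1, Q t₀ ≤ Q r := by
    intro t₀ ht₀ hat₀ r hr
    have hsub : Icc t₀ r ⊆ Ioo 0 1 := fun x hx =>
      ⟨lt_of_lt_of_le ht₀.1 hx.1, lt_of_le_of_lt hx.2 hr.2⟩
    have hM : MonotoneOn Q (Icc t₀ r) := by
      apply monotoneOn_of_deriv_nonneg (convex_Icc t₀ r)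
      · intro x hx
        exact ((hQder x (hsub hx) (le_trans hat₀ hx.1)).1.continuousAt).continuousWithinAt
      · intro x hx
        rw [interior_Icc] at hx
        exact ((hQder x (hsub (Ioo_subset_Icc_self hx))
          (le_trans hat₀ hx.1.le)).1.differentiableAt).differentiableWithinAt
      · intro x hx
        rw [interior_Icc] at hx
        have h := hQder x (hsub (Ioo_subset_Icc_self hx)) (le_trans hat₀ hx.1.le)
        rw [h.1.deriv]
        exact h.2
    exact hM (left_mem_Icc.2 hr.1) (right_mem_Icc.2 hr.1) hr.1
  -- derivWithin facts
  have hgcont : ContinuousOn (derivWithin φ (Ioc 0 1)) (Ioc 0 1) :=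
    hφ.continuousOn_derivWithin (uniqueDiffOn_Ioc 0 1) (by norm_num)
  have hgeq : ∀ s ∈ Ioo (0:ℝ) 1, derivWithin φ (Ioc 0 1) s = deriv φ s := fun s hs =>
    derivWithin_of_mem_nhds (Ioc_mem_nhds hs.1 hs.2)
  -- limit of Q at 1⁻
  have hlim : Tendsto Q (𝓝[<] (1:ℝ)) (𝓝 (φ 1 ^ 2)) := by
    set F : ℝ → ℝ := fun s => φ s ^ 2 + (1 - s ^ 2) * (derivWithin φ (Ioc 0 1) s) ^ 2 / q s
      with hFdef
    have hqc : ContinuousAt q 1 := by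
      rw [hqdef]
      exact (ContinuousAt.sub continuousAt_const
        (continuousAt_const.mul ((continuous_pow 2).continuousAt))).add
        (ContinuousAt.div continuousAt_const ((continuous_pow 2).continuousAt) (by norm_num))
    have hφ1 : ContinuousWithinAt φ (Ioo 0 1) 1 :=
      (hφcont 1 (by norm_num)).mono Ioo_subset_Icc_self
    have hg1 : ContinuousWithinAt (derivWithin φ (Ioc 0 1)) (Ioo 0 1) 1 :=
      (hgcont 1 ⟨zero_lt_one, le_refl 1⟩).mono Ioo_subset_Ioc_self
    have hF : ContinuousWithinAt F (Ioo 0 1) 1 := by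
      apply ContinuousWithinAt.add (hφ1.pow 2)
      apply ContinuousWithinAt.div
      · exact (continuousWithinAt_const.sub ((continuous_pow 2).continuousWithinAt)).mul
          (hg1.pow 2)
      · exact hqc.continuousWithinAt
      · exact hq1.ne'
    have hF1 : F 1 = φ 1 ^ 2 := by simp [hFdef]
    have hFlim : Tendsto F (𝓝[Ioo (0:ℝ) 1] 1) (𝓝 (φ 1 ^ 2)) := hF1 ▸ hF
    rw [nhdsWithin_Ioo_eq_nhdsLT zero_lt_one] at hFlim
    apply hFlim.congr'
    filter_upwards [Ioo_mem_nhdsLT_of_mem (⟨zero_lt_one, le_refl (1:ℝ)⟩ : (1:ℝ) ∈ Ioc 0 1)]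
      with s hs
    simp only [hFdef, hQdef, hgeq s hs]
  -- key pointwise bound
  have hkey : ∀ t ∈ Ioo (0:ℝ) 1, aα ≤ t → φ t ^ 2 ≤ φ 1 ^ 2 := by
    intro t ht hat
    have h1 : Q t ≤ φ 1 ^ 2 := by
      refine ge_of_tendsto hlim ?_
      filter_upwards [Ioo_mem_nhdsLT_of_mem (⟨ht.2, le_refl (1:ℝ)⟩ : (1:ℝ) ∈ Ioc t 1)]
        with r hr
      exact hmono t ht hat r ⟨hr.1.le, hr.2⟩
    have hqs : 0 < q t := lt_of_lt_of_le hq1 (hqge t ht.1 ht.2.le hat)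
    have h2 : φ t ^ 2 ≤ Q t := by
      have h3 : 0 ≤ (1 - t ^ 2) * (deriv φ t) ^ 2 / q t :=
        div_nonneg (mul_nonneg (by nlinarith [ht.2]) (sq_nonneg _)) hqs.le
      simp only [hQdef]
      linarith
    linarith
  -- absolute-value bound on all of [aα, 1]
  have habs : ∀ t ∈ Icc aα 1, |φ t| ≤ |φ 1| := by
    intro t ht
    have hsq : φ t ^ 2 ≤ φ 1 ^ 2 := by
      rcases eq_or_lt_of_le ht.2 with h | h
      · rw [h]
      · rcases lt_or_eq_of_le (le_trans haα0 ht.1) with h0 | h0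
        · exact hkey t ⟨h0, h⟩ ht.1
        · have haz : aα = 0 := le_antisymm (h0 ▸ ht.1) haα0
          have ht0 : t = 0 := h0.symm
          subst ht0
          have hφ0 : ContinuousWithinAt φ (Ioo 0 1) 0 :=
            (hφcont 0 (by norm_num)).mono Ioo_subset_Icc_self
          have htend : Tendsto (fun s => φ s ^ 2) (𝓝[Ioo (0:ℝ) 1] 0) (𝓝 (φ 0 ^ 2)) :=
            hφ0.pow 2
          have hne : (𝓝[Ioo (0:ℝ) 1] 0).NeBot := by
            rw [nhdsWithin_Ioo_eq_nhdsGT zero_lt_one]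
            infer_instance
          refine le_of_tendsto htend ?_
          filter_upwards [self_mem_nhdsWithin] with s hs
          exact hkey s hs (haz ▸ hs.1.le)
    nlinarith [abs_nonneg (φ t), abs_nonneg (φ 1), sq_abs (φ t), sq_abs (φ 1)]
  apply IsGreatest.csSup_eq
  constructor
  · exact ⟨1, ⟨haα1, le_refl 1⟩, rfl⟩
  · rintro y ⟨t, ht, rfl⟩
    exact habs t ht
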